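/- Let K be a conjugacy class of a finite group G such that KK⁻¹ = {1} ∪ D where D is a conjugacy class with |D| = |K|. Then ⟨K⟩ is solvable with derived length at most 3. -/

import Mathlib

open scoped Pointwise
open scoped commutatorElement



private lemma orderOf_dvd_ncard_of_smul_eq {G : Type*} [Group G] [Finite G] (g : G)
    (C : Set G) (hC : g • C = C) : orderOf g ∣ C.ncard := by
  classical
  generalize hn : C.ncard = n
  induction n using Nat.strong_induction_on generalizing C with
  | _ n ih =>
  rcases C.eq_empty_or_nonempty with rfl | ⟨c, hc⟩
  · subst hn; simp
  · have hfwd : ∀ a ∈ C, g * a ∈ C := by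
      intro a ha
      rw [← hC]
      exact ⟨a, ha, rfl⟩
    have hbwd : ∀ a ∈ C, g⁻¹ * a ∈ C := by
      intro a ha
      rw [← hC] at ha
      obtain ⟨b, hb, rfl⟩ := ha
      simpa using hb
    have hpow : ∀ k : ℤ, g ^ k * c ∈ C := by
      intro k
      induction k using Int.induction_on with
      | zero => simpa using hc
      | succ k ihk =>
          have := hfwd _ ihk
          rw [zpow_add, zpow_one]
          rw [show g ^ (k : ℤ) * g * c = g * (g ^ (k : ℤ) * c) by group]
          exact this
      | pred k ihk =>
          have := hbwd _ ihk
          rw [show (-(k:ℤ) - 1) = -(k:ℤ) + (-1) by ring, zpow_add]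
          rw [show g ^ (-(k : ℤ)) * g ^ (-1 : ℤ) * c = g⁻¹ * (g ^ (-(k:ℤ)) * c) by
            rw [zpow_neg_one]; group]
          exact this
    set O : Set G := (fun z => z * c) '' (Subgroup.zpowers g : Set G) with hO
    have hOC : O ⊆ C := by
      rintro _ ⟨z, hz, rfl⟩
      obtain ⟨k, rfl⟩ := Subgroup.mem_zpowers_iff.mp hz
      exact hpow k
    have hcO : c ∈ O := ⟨1, Subgroup.one_mem _, one_mul c⟩
    have hOcard : O.ncard = orderOf g := by
      rw [hO, Set.ncard_image_of_injective _ (mul_left_injective c)]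
      rw [← Nat.card_zpowers g]
      exact (Nat.card_coe_set_eq _).symm
    have hgO : g • O = O := by
      ext y
      simp only [hO, Set.mem_smul_set, Set.mem_image]
      constructor
      · rintro ⟨_, ⟨z, hz, rfl⟩, rfl⟩
        exact ⟨g * z, Subgroup.mul_mem _ (Subgroup.mem_zpowers g) hz, by rw [smul_eq_mul]; group⟩
      · rintro ⟨z, hz, rfl⟩
        exact ⟨g⁻¹ * z * c, ⟨g⁻¹ * z,
          Subgroup.mul_mem _ (Subgroup.inv_mem _ (Subgroup.mem_zpowers g)) hz, rfl⟩, by rw [smul_eq_mul]; group⟩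
    have hgdiff : g • (C \ O) = C \ O := by
      rw [Set.smul_set_sdiff, hC, hgO]
    have hlt : (C \ O).ncard < n := by
      rw [← hn]
      refine Set.ncard_lt_ncard ?_ (Set.toFinite C)
      constructor
      · exact Set.diff_subset
      · intro hsub
        exact (hsub hc).2 hcO
    have hih := ih _ hlt _ hgdiff rfl
    have hsum : (C \ O).ncard + O.ncard = C.ncard :=
      Set.ncard_diff_add_ncard_of_subset hOC (Set.toFinite C)
    rw [← hn, ← hsum, hOcard]
    exact Nat.dvd_add hih dvd_rfl


private lemma solvable_of_derived_comm {H : Type*} [Group H]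
    (hc : ∀ p q : H, p ∈ derivedSeries H 1 → q ∈ derivedSeries H 1 → p * q = q * p) :
    IsSolvable H ∧ derivedSeries H 3 = ⊥ := by
  have h2 : derivedSeries H 2 = ⊥ := by
    rw [eq_bot_iff, show (2 : ℕ) = 1 + 1 from rfl, derivedSeries_succ, Subgroup.commutator_le]
    intro p hp q hq
    rw [Subgroup.mem_bot, commutatorElement_eq_one_iff_mul_comm]
    exact hc p q hp hq
  have h3 : derivedSeries H 3 = ⊥ := by
    rw [show (3 : ℕ) = 2 + 1 from rfl, derivedSeries_succ, h2]
    exact Subgroup.commutator_bot_left _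
  exact ⟨⟨⟨3, h3⟩⟩, h3⟩

private lemma comm_case {G : Type*} [Group G] (Kset : Set G)
    (hcomm : ∀ a ∈ Kset, ∀ b ∈ Kset, a * b = b * a) :
    ∀ p q : ↥(Subgroup.closure Kset), p * q = q * p := by
  have h1 : Subgroup.closure Kset ≤ Subgroup.centralizer Kset := by
    rw [Subgroup.closure_le]
    intro a ha
    exact Subgroup.mem_centralizer_iff.mpr fun b hb => hcomm b hb a ha
  have h2 : Subgroup.closure Kset ≤
      Subgroup.centralizer (Subgroup.closure Kset : Set G) := by
    rw [Subgroup.closure_le]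
    intro a ha
    rw [SetLike.mem_coe, Subgroup.mem_centralizer_iff]
    intro b hb
    exact (Subgroup.mem_centralizer_iff.mp (h1 hb) a ha).symm
  intro p q
  have := Subgroup.mem_centralizer_iff.mp (h2 q.2) (p : G) p.2
  exact Subtype.ext (by simpa using this)

theorem closure_K_solvable_dl_le_three_of_card_eq
    {G : Type*} [Group G] [Finite G] (x d : G)
    (h : conjugatesOf x * (conjugatesOf x)⁻¹ = {1} ∪ conjugatesOf d)
    (hcard : (conjugatesOf d).ncard = (conjugatesOf x).ncard) :
    IsSolvable (↥(Subgroup.closure (conjugatesOf x))) ∧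
    derivedSeries (↥(Subgroup.closure (conjugatesOf x))) 3 = ⊥ := by
  classical
  set K := conjugatesOf x with hK
  set D := conjugatesOf d with hD
  have hxK : x ∈ K := mem_conjugatesOf_self
  have hKconj : ∀ a ∈ K, ∀ g : G, g * a * g⁻¹ ∈ K := by
    intro a ha g
    exact (ha : IsConj x a).trans (isConj_iff.mpr ⟨g, rfl⟩)
  have hDconj : ∀ a ∈ D, ∀ g : G, g * a * g⁻¹ ∈ D := by
    intro a ha g
    exact (ha : IsConj d a).trans (isConj_iff.mpr ⟨g, rfl⟩)
  set S : Set G := {1} ∪ D with hS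
  have honeS : (1 : G) ∈ S := Set.mem_union_left _ rfl
  have hmulS : ∀ a ∈ K, ∀ b ∈ K, a * b⁻¹ ∈ S := by
    intro a ha b hb
    rw [← h]
    exact Set.mul_mem_mul ha (Set.inv_mem_inv.mpr hb)
  have hSconj : ∀ s ∈ S, ∀ g : G, g * s * g⁻¹ ∈ S := by
    intro s hs g
    rcases hs with hs | hs
    · rw [Set.mem_singleton_iff] at hs
      subst hs
      simpa using honeS
    · exact Set.mem_union_right _ (hDconj s hs g)
  have hinvmul : ∀ a ∈ K, ∀ b ∈ K, a⁻¹ * b ∈ S := by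
    intro a ha b hb
    have h1 : b * a⁻¹ ∈ S := hmulS b hb a ha
    have h2 := hSconj _ h1 a⁻¹
    rw [show a⁻¹ * (b * a⁻¹) * a⁻¹⁻¹ = a⁻¹ * b by group] at h2
    exact h2
  by_cases hn3 : 3 ≤ K.ncard
  swap
  · -- small case : all elements of K commute
    have hcomm : ∀ a ∈ K, ∀ b ∈ K, a * b = b * a := by
      intro a ha b hb
      rcases eq_or_ne a b with rfl | hab
      · rfl
      have hcK : a * b * a⁻¹ ∈ K := hKconj b hb a
      rcases eq_or_ne (a * b * a⁻¹) b with he | hne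
      · conv_lhs => rw [show a * b = (a * b * a⁻¹) * a by group]
        rw [he]
      · exfalso
        have hac : a ≠ a * b * a⁻¹ := by
          intro hh
          apply hab
          have h2 : a * a = (a * b * a⁻¹) * a := by rw [← hh]
          have h3 : (a * b * a⁻¹) * a = a * b := by group
          exact mul_left_cancel (h2.trans h3)
        have hsub : ({a, b, a * b * a⁻¹} : Set G) ⊆ K := by
          intro y hy
          rcases hy with rfl | rfl | rfl
          · exact ha
          · exact hb
          · exact hcK
        have h3 : ({a, b, a * b * a⁻¹} : Set G).ncard = 3 := by
          rw [Set.ncard_insert_of_notMem (by simp [hab, hac]) (Set.toFinite _),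
            Set.ncard_pair (Ne.symm hne)]
        have hle := Set.ncard_le_ncard hsub (Set.toFinite K)
        omega
    exact solvable_of_derived_comm fun p q _ _ => comm_case K hcomm p q
  · -- main case
    have hD1 : (1 : G) ∉ D := by
      intro h1
      have hDsub : D ⊆ {1} := by
        intro s hs
        have hc : IsConj (1 : G) s := (h1 : IsConj d 1).symm.trans (hs : IsConj d s)
        obtain ⟨c, hc⟩ := isConj_iff.mp hc
        simp only [Set.mem_singleton_iff]
        rw [← hc]
        group
      have : D.ncard ≤ 1 := by
        simpa using Set.ncard_le_ncard hDsub (Set.toFinite _)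
      omega
    have hcardS : S.ncard = K.ncard + 1 := by
      rw [hS, Set.singleton_union, Set.ncard_insert_of_notMem hD1 (Set.toFinite _), hcard]
    -- uniqueness of the element of K missing a given translate
    have huniq : ∀ s ∈ S, ∀ a ∈ K, ∀ a' ∈ K, a * s ∉ K → a' * s ∉ K → a = a' := by
      intro s hs a ha a' ha' hA hA'
      have himg : ∀ b ∈ K, b * s ∉ K → b⁻¹ • K = S \ {s} := by
        intro b hb hbs
        apply Set.eq_of_subset_of_ncard_le
        · rintro _ ⟨z, hz, rfl⟩
          show b⁻¹ * z ∈ S \ {s}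
          refine ⟨hinvmul b hb z hz, ?_⟩
          simp only [Set.mem_singleton_iff]
          intro hcontra
          apply hbs
          have hz' : z = b * s := by rw [← hcontra]; group
          rwa [← hz']
        · rw [Set.ncard_smul_set, Set.ncard_diff_singleton_of_mem hs, hcardS]
          omega
        · exact Set.toFinite _
      have e : a⁻¹ • K = a'⁻¹ • K := by rw [himg a ha hA, himg a' ha' hA']
      have hKK : (a' * a⁻¹) • K = K := by
        rw [← smul_smul, e, smul_smul, mul_inv_cancel, one_smul]
      have hSS : (a' * a⁻¹) • S = S := by
        rw [← h, ← smul_mul_assoc, hKK]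
      have hdvd1 := orderOf_dvd_ncard_of_smul_eq _ K hKK
      have hdvd2 := orderOf_dvd_ncard_of_smul_eq _ S hSS
      have hdvd := Nat.dvd_sub hdvd2 hdvd1
      rw [hcardS, Nat.add_sub_cancel_left] at hdvd
      have hone : a' * a⁻¹ = 1 := by
        rw [← orderOf_eq_one_iff]
        exact Nat.dvd_one.mp hdvd
      exact (mul_inv_eq_one.mp hone).symm
    -- S is closed under multiplication
    have hPQ : ∀ u ∈ S, K.ncard - 1 ≤ {a | a ∈ K ∧ a * u ∈ K}.ncard := by
      intro u hu
      set B := {a | a ∈ K ∧ a * u ∉ K} with hB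
      have hBsub : B ⊆ K := fun a ha => ha.1
      have hB1 : B.ncard ≤ 1 := by
        rw [Set.ncard_le_one (Set.toFinite B)]
        intro a ha b hb
        exact huniq u hu a ha.1 b hb.1 ha.2 hb.2
      have hPeq : {a | a ∈ K ∧ a * u ∈ K} = K \ B := by
        ext a
        simp only [hB, Set.mem_setOf_eq, Set.mem_diff]
        tauto
      rw [hPeq, Set.ncard_diff hBsub (Set.toFinite _)]
      omega
    have hSmul : ∀ s ∈ S, ∀ t ∈ S, s * t ∈ S := by
      intro s hs t ht
      rcases hs with hs1 | hsD
      · rw [Set.mem_singleton_iff] at hs1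
        rw [hs1, one_mul]
        exact ht
      rcases ht with ht1 | htD
      · rw [Set.mem_singleton_iff] at ht1
        rw [ht1, mul_one]
        exact Set.mem_union_right _ hsD
      have hsS : s ∈ S := Set.mem_union_right _ hsD
      have htS : t ∈ S := Set.mem_union_right _ htD
      have hPc := hPQ s hsS
      have hQc := hPQ t htS
      set P := {a | a ∈ K ∧ a * s ∈ K} with hP
      set Q := {a | a ∈ K ∧ a * t ∈ K} with hQ
      have hint : ((fun a => a * s) '' P ∩ Q).Nonempty := by
        by_contra hempty
        rw [Set.not_nonempty_iff_eq_empty] at hempty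
        have hdisj : Disjoint ((fun a => a * s) '' P) Q :=
          Set.disjoint_iff_inter_eq_empty.mpr hempty
        have hun : ((fun a => a * s) '' P ∪ Q).ncard = P.ncard + Q.ncard := by
          rw [Set.ncard_union_eq hdisj (Set.toFinite _) (Set.toFinite _),
            Set.ncard_image_of_injective _ (mul_left_injective s)]
        have hsubK : (fun a => a * s) '' P ∪ Q ⊆ K := by
          rintro y (⟨a, haP, rfl⟩ | hyQ)
          · exact haP.2
          · exact hyQ.1
        have hleK := Set.ncard_le_ncard hsubK (Set.toFinite K)
        omega
      obtain ⟨y, ⟨a, haP, rfl⟩, hyQ⟩ := hint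
      have hst : s * t = a⁻¹ * (a * s * t) := by group
      rw [hst]
      exact hinvmul a haP.1 _ hyQ.2
    have hSinv : ∀ s ∈ S, s⁻¹ ∈ S := by
      intro s hs
      rw [← h] at hs ⊢
      obtain ⟨a, ha, b, hb, rfl⟩ := hs
      rw [Set.mem_inv] at hb
      rw [mul_inv_rev]
      exact Set.mul_mem_mul hb (Set.inv_mem_inv.mpr ha)
    set SG : Subgroup G :=
      { carrier := S
        one_mem' := honeS
        mul_mem' := fun ha hb => hSmul _ ha _ hb
        inv_mem' := fun ha => hSinv _ ha } with hSG
    have hmemSG : ∀ y : G, y ∈ SG ↔ y ∈ S := fun y => Iff.rfl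
    haveI hSGnormal : SG.Normal := ⟨fun s hs g => hSconj s hs g⟩
    -- every element of D has the same prime order p
    have horder : ∀ s ∈ D, orderOf s = orderOf d := by
      intro s hs
      obtain ⟨c, hc⟩ := isConj_iff.mp (hs : IsConj d s)
      have hsc : SemiconjBy c d s := by
        show c * d = s * c
        rw [← hc]
        group
      exact (hsc.orderOf_eq c).symm
    have hdD : d ∈ D := mem_conjugatesOf_self
    have hd1 : d ≠ 1 := fun hh => hD1 (hh ▸ hdD)
    set p := (orderOf d).minFac with hp
    have hpp : p.Prime := Nat.minFac_prime (by simpa [orderOf_eq_one_iff] using hd1)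
    have hprime : orderOf d = p := by
      have hdvd : p ∣ orderOf d := Nat.minFac_dvd _
      set e := d ^ (orderOf d / p) with he
      have h1 : (orderOf d / p) ∣ orderOf d := Nat.div_dvd_of_dvd hdvd
      have horder_e : orderOf e = p := by
        rw [he, orderOf_pow]
        rw [Nat.gcd_eq_right h1]
        exact Nat.div_div_self hdvd (orderOf_pos d).ne'
      have he1 : e ≠ 1 := by
        intro hh
        rw [hh, orderOf_one] at horder_e
        exact hpp.one_lt.ne' horder_e.symm
      have heSG : e ∈ SG := by
        rw [he]
        exact SG.pow_mem (Set.mem_union_right _ hdD) _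
      have heD : e ∈ D := by
        rcases (hmemSG e).mp heSG with h1' | hD'
        · exact absurd h1' he1
        · exact hD'
      have := horder e heD
      rw [horder_e] at this
      exact this.symm
    have hordD : ∀ s ∈ D, orderOf s = p := fun s hs => (horder s hs).trans hprime
    haveI : Fact p.Prime := ⟨hpp⟩
    have hpg : IsPGroup p ↥SG := by
      intro g
      refine ⟨1, ?_⟩
      apply Subtype.ext
      rw [pow_one]
      push_cast
      rcases eq_or_ne (g : G) 1 with h1 | h1
      · rw [h1, one_pow]
      · have hgD : (g : G) ∈ D := by
          rcases (hmemSG (g : G)).mp g.2 with h1' | hD'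
          · exact absurd h1' h1
          · exact hD'
        rw [← hordD _ hgD]
        exact pow_orderOf_eq_one _
    haveI hnontriv : Nontrivial ↥SG := by
      refine ⟨⟨⟨d, Set.mem_union_right _ hdD⟩, 1, ?_⟩⟩
      intro hh
      exact hd1 (congrArg Subtype.val hh)
    have hcenter : Nontrivial (Subgroup.center ↥SG) := hpg.center_nontrivial
    obtain ⟨z, hz1⟩ := exists_ne (1 : Subgroup.center ↥SG)
    have hzc : ∀ w : ↥SG, w * z.1 = z.1 * w := fun w => Subgroup.mem_center_iff.mp z.2 w
    have hz1' : ((z.1 : ↥SG) : G) ≠ 1 := by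
      intro hh
      exact hz1 (Subtype.ext (Subtype.ext hh))
    have hzD : ((z.1 : ↥SG) : G) ∈ D := by
      rcases (hmemSG _).mp (z.1).2 with h1' | hD'
      · exact absurd h1' hz1'
      · exact hD'
    have hDcentral : ∀ t ∈ D, ∀ u ∈ S, t * u = u * t := by
      intro t ht u hu
      have hconj : IsConj ((z.1 : ↥SG) : G) t := (hzD : IsConj d _).symm.trans (ht : IsConj d t)
      obtain ⟨c, hc⟩ := isConj_iff.mp hconj
      have hv : c⁻¹ * u * c ∈ S := by
        have h2 := hSconj u hu c⁻¹
        rwa [inv_inv] at h2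
      have hcomm := hzc ⟨c⁻¹ * u * c, hv⟩
      have hcomm' : (c⁻¹ * u * c) * ((z.1 : ↥SG) : G) = ((z.1 : ↥SG) : G) * (c⁻¹ * u * c) :=
        congrArg Subtype.val hcomm
      calc t * u = (c * ((z.1 : ↥SG) : G) * c⁻¹) * u := by rw [hc]
        _ = c * (((z.1 : ↥SG) : G) * (c⁻¹ * u * c)) * c⁻¹ := by group
        _ = c * ((c⁻¹ * u * c) * ((z.1 : ↥SG) : G)) * c⁻¹ := by rw [← hcomm']
        _ = u * (c * ((z.1 : ↥SG) : G) * c⁻¹) := by group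
        _ = u * t := by rw [hc]
    have hScomm : ∀ a ∈ S, ∀ b ∈ S, a * b = b * a := by
      intro a ha b hb
      rcases ha with ha1 | haD
      · rw [Set.mem_singleton_iff] at ha1
        rw [ha1, one_mul, mul_one]
      · exact hDcentral a haD b hb
    -- conclude
    set H := Subgroup.closure K with hH
    have hcommHH : ⁅H, H⁆ ≤ SG := by
      rw [Subgroup.commutator_le]
      intro a ha b hb
      have hπ : ∀ c ∈ H, ∃ m : ℤ, ((x : G) : G ⧸ SG) ^ m = ((c : G) : G ⧸ SG) := by
        intro c hc
        have hle : H ≤ (Subgroup.zpowers ((x : G) : G ⧸ SG)).comap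
            (QuotientGroup.mk' SG) := by
          rw [hH, Subgroup.closure_le]
          intro k hk
          rw [SetLike.mem_coe, Subgroup.mem_comap]
          have hkx : ((k : G) : G ⧸ SG) = ((x : G) : G ⧸ SG) :=
            (QuotientGroup.eq (s := SG)).mpr (hinvmul k hk x hxK)
          rw [QuotientGroup.mk'_apply, hkx]
          exact Subgroup.mem_zpowers _
        have := hle hc
        rw [Subgroup.mem_comap, QuotientGroup.mk'_apply] at this
        exact Subgroup.mem_zpowers_iff.mp this
      obtain ⟨m, hm⟩ := hπ a ha
      obtain ⟨l, hl⟩ := hπ b hb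
      have hcommq : ((a : G) : G ⧸ SG) * ((b : G) : G ⧸ SG)
          = ((b : G) : G ⧸ SG) * ((a : G) : G ⧸ SG) := by
        rw [← hm, ← hl, ← zpow_add, ← zpow_add, add_comm]
      have h1q : ((⁅a, b⁆ : G) : G ⧸ SG) = 1 := by
        have hco : ((⁅a, b⁆ : G) : G ⧸ SG)
            = ⁅((a : G) : G ⧸ SG), ((b : G) : G ⧸ SG)⁆ := by
          simp [commutatorElement_def]
        rw [hco, commutatorElement_eq_one_iff_mul_comm]
        exact hcommq
      exact (QuotientGroup.eq_one_iff _).mp h1q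
    have hmem : ∀ r : ↥H, r ∈ derivedSeries ↥H 1 → (r : G) ∈ SG := by
      intro r hr
      have hmap : (derivedSeries ↥H 1).map H.subtype = ⁅H, H⁆ := by
        rw [show (1 : ℕ) = 0 + 1 from rfl, derivedSeries_succ, Subgroup.map_commutator,
          derivedSeries_zero, ← MonoidHom.range_eq_map, Subgroup.range_subtype]
      have : (r : G) ∈ (derivedSeries ↥H 1).map H.subtype := ⟨r, hr, rfl⟩
      rw [hmap] at this
      exact hcommHH this
    refine solvable_of_derived_comm ?_
    intro r q hr hq
    exact Subtype.ext (hScomm _ (hmem r hr) _ (hmem q hq))
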